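/- Let g be the Heisenberg Lie bialgebra (ℂ-basis x, y, h; [x,y] = h; δ_g(h) = 0, δ_g(x) = y∧h, δ_g(y) = h∧x). For a flag datum (0, D, kh, B) with B = e₁ x∧y + e₂ y∧h + e₃ h∧x and D a derivation whose matrix in the basis (x,y,h) has entries D(x) = a₁x + a₂y, D(y) = b₁x + b₂y, D(h) = (a₁+b₂)h, the flag-datum compatibility conditions are equivalent to: a₁k + e₁ − a₂ − b₁ = 0, a₂k − 2b₂ = 0, b₂k + e₁ + b₁ + a₂ = 0, b₁k + 2a₁ = 0, and ke₁ = 0. In particular, if k = 0 then e₁ = a₁ = b₂ = 0 and a₂ = −b₁; and if k ∉ {0, ±2√−1} then additionally a₂ = b₁ = 0. -/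

import Mathlib

open TensorProduct LinearMap

noncomputable section

/-- The flip `A ⊗ B → B ⊗ A`. -/
def flipT (k A B : Type*) [Field k] [AddCommGroup A] [Module k A]
    [AddCommGroup B] [Module k B] : A ⊗[k] B →ₗ[k] B ⊗[k] A :=
  (TensorProduct.comm k A B).toLinearMap

/-- Swap of the first two tensor factors `A ⊗ (B ⊗ C) → B ⊗ (A ⊗ C)`. -/
def swap12 (k A B C : Type*) [Field k] [AddCommGroup A] [Module k A]
    [AddCommGroup B] [Module k B] [AddCommGroup C] [Module k C] :
    A ⊗[k] (B ⊗[k] C) →ₗ[k] B ⊗[k] (A ⊗[k] C) :=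
  (TensorProduct.assoc k B A C).toLinearMap ∘ₗ
    rTensor C (flipT k A B) ∘ₗ (TensorProduct.assoc k A B C).symm.toLinearMap

/-- Associator as a linear map. -/
def asr (k A B C : Type*) [Field k] [AddCommGroup A] [Module k A]
    [AddCommGroup B] [Module k B] [AddCommGroup C] [Module k C] :
    (A ⊗[k] B) ⊗[k] C →ₗ[k] A ⊗[k] (B ⊗[k] C) :=
  (TensorProduct.assoc k A B C).toLinearMap

/-- `δ : M → M ⊗ M` is a Lie coalgebra structure: anti-cocommutativity and co-Jacobi. -/
def IsLieCoalgebra {k M : Type*} [Field k] [AddCommGroup M] [Module k M]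
    (δ : M →ₗ[k] M ⊗[k] M) : Prop :=
  (∀ m, flipT k M M (δ m) = - δ m) ∧
  (∀ m, lTensor M δ (δ m) - swap12 k M M M (lTensor M δ (δ m)) =
      asr k M M M (rTensor M δ (δ m)))

/-- A (bilinear) map `b` is a Lie bracket: alternating and Jacobi (in Leibniz form). -/
def IsLieBracket {k L : Type*} [Field k] [AddCommGroup L] [Module k L]
    (b : L →ₗ[k] L →ₗ[k] L) : Prop :=
  (∀ a, b a a = 0) ∧ (∀ a c d, b a (b c d) = b (b a c) d + b c (b a d))

/-- The adjoint action of `a` on `L ⊗ L`: `a.(Σ b₁⊗b₂) = Σ [a,b₁]⊗b₂ + b₁⊗[a,b₂]`. -/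
def adT {k L : Type*} [Field k] [AddCommGroup L] [Module k L]
    (b : L →ₗ[k] L →ₗ[k] L) (a : L) : L ⊗[k] L →ₗ[k] L ⊗[k] L :=
  rTensor L (b a) + lTensor L (b a)

/-- `(L, b, δ)` is a Lie bialgebra. -/
def IsLieBialgebra {k L : Type*} [Field k] [AddCommGroup L] [Module k L]
    (b : L →ₗ[k] L →ₗ[k] L) (δ : L →ₗ[k] L ⊗[k] L) : Prop :=
  IsLieBracket b ∧ IsLieCoalgebra δ ∧
    ∀ a c, δ (b a c) = adT b a (δ c) - adT b c (δ a)

variable {k g V : Type*} [Field k] [CharZero k]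
  [AddCommGroup g] [Module k g] [AddCommGroup V] [Module k V]

/-- The unified co-product map on `E = g ⊕ V`:
`δ_E(a + x) = δ_g(a) + Δ_E(x) − τΔ_E(x) + Δ_V(x) + δ_V(x)`. -/
def uniCoprod (δg : g →ₗ[k] g ⊗[k] g) (ΔE : V →ₗ[k] g ⊗[k] V)
    (ΔV : V →ₗ[k] g ⊗[k] g) (δV : V →ₗ[k] V ⊗[k] V) :
    (g × V) →ₗ[k] (g × V) ⊗[k] (g × V) :=
  map (inl k g V) (inl k g V) ∘ₗ δg ∘ₗ fst k g V +
    (map (inl k g V) (inr k g V) ∘ₗ ΔE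
      - map (inr k g V) (inl k g V) ∘ₗ flipT k g V ∘ₗ ΔE
      + map (inl k g V) (inl k g V) ∘ₗ ΔV
      + map (inr k g V) (inr k g V) ∘ₗ δV) ∘ₗ snd k g V

/-- Conditions (CLE1)–(CLE5): `(Δ_E, Δ_V, δ_V)` is a Lie coalgebraic extending
structure of `(g, δ_g)` by `V`. -/
def IsCoalgExtStructure (δg : g →ₗ[k] g ⊗[k] g) (ΔE : V →ₗ[k] g ⊗[k] V)
    (ΔV : V →ₗ[k] g ⊗[k] g) (δV : V →ₗ[k] V ⊗[k] V) : Prop :=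
  -- (CLE1)
  (∀ x, flipT k g g (ΔV x) = - ΔV x) ∧ (∀ x, flipT k V V (δV x) = - δV x) ∧
  -- (CLE2)
  (∀ x, lTensor g ΔV (ΔE x) + lTensor g δg (ΔV x)
      - swap12 k g g g (lTensor g ΔV (ΔE x)) - swap12 k g g g (lTensor g δg (ΔV x)) =
      - asr k g g g (rTensor g ΔV (flipT k g V (ΔE x)))
      + asr k g g g (rTensor g δg (ΔV x))) ∧
  -- (CLE3)
  (∀ x, lTensor g ΔE (ΔE x) - swap12 k g g V (lTensor g ΔE (ΔE x)) =
      asr k g g V (rTensor V δg (ΔE x)) + asr k g g V (rTensor V ΔV (δV x))) ∧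
  -- (CLE4)
  (∀ x, lTensor g δV (ΔE x) - swap12 k V g V (lTensor V ΔE (δV x)) =
      asr k g V V (rTensor V ΔE (δV x))) ∧
  -- (CLE5)
  (∀ x, lTensor V δV (δV x) - swap12 k V V V (lTensor V δV (δV x)) =
      asr k V V V (rTensor V δV (δV x)))

end
noncomputable section
variable {k g : Type*} [Field k] [CharZero k] [AddCommGroup g] [Module k g]

/-- A flag datum `(α, D, A, B)` of the Lie bialgebra `(g, [·,·], δ_g)`. -/
def IsFlagDatum (gbr : g →ₗ[k] g →ₗ[k] g) (δg : g →ₗ[k] g ⊗[k] g)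
    (α : g →ₗ[k] k) (D : g →ₗ[k] g) (A : g) (B : g ⊗[k] g) : Prop :=
  -- B ∈ g ∧ g
  flipT k g g B = - B ∧
  -- (1)
  (∀ a b, α (gbr a b) = 0) ∧ δg A = 0 ∧
  (∀ a, gbr a A = TensorProduct.rid k g (lTensor g α (δg a))) ∧
  -- (2)
  (∀ a b, D (gbr a b) = gbr (D a) b + gbr a (D b) + α a • D b - α b • D a) ∧
  -- (3)
  (A ⊗ₜ[k] B - swap12 k g g g (A ⊗ₜ[k] B) + asr k g g g (B ⊗ₜ[k] A)
      + lTensor g δg B - swap12 k g g g (lTensor g δg B)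
      - asr k g g g (rTensor g δg B) = 0) ∧
  -- (4)
  (∀ a, D a ⊗ₜ[k] A - A ⊗ₜ[k] D a + α a • B + adT gbr a B + δg (D a)
      - rTensor g D (δg a) - lTensor g D (δg a) = 0)

/-- Equivalence of flag datums: `α = α'`, `A = A'`, and there are `U ∈ g`,
`β ∈ k*` with `D(a) = [U,a] + βD'(a) − α(a)U` and
`B = δ_g(U) + βB' + U⊗A − A⊗U`. -/
def FlagEquiv (gbr : g →ₗ[k] g →ₗ[k] g) (δg : g →ₗ[k] g ⊗[k] g)
    (α : g →ₗ[k] k) (D : g →ₗ[k] g) (A : g) (B : g ⊗[k] g)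
    (α' : g →ₗ[k] k) (D' : g →ₗ[k] g) (A' : g) (B' : g ⊗[k] g) : Prop :=
  α = α' ∧ A = A' ∧ ∃ (U : g) (β : k), β ≠ 0 ∧
    (∀ a, D a = gbr U a + β • D' a - α a • U) ∧
    B = δg U + β • B' + U ⊗ₜ[k] A - A ⊗ₜ[k] U

end
noncomputable section

/-- The 3-dimensional Heisenberg Lie algebra, as `ℂ³` with coordinates the
coefficients of the basis `(x, y, h)`. -/
abbrev Heis : Type := ℂ × ℂ × ℂ

namespace Heis

def X : Heis := (1, 0, 0)
def Y : Heis := (0, 1, 0)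
def H : Heis := (0, 0, 1)

/-- The Heisenberg bracket: `[x,y] = h`, `[h,x] = [h,y] = 0`. -/
def hbr : Heis →ₗ[ℂ] Heis →ₗ[ℂ] Heis :=
  LinearMap.mk₂ ℂ (fun p q => (0, 0, p.1 * q.2.1 - p.2.1 * q.1))
    (by intros; simp [Prod.ext_iff]; ring)
    (by intros; simp [Prod.ext_iff]; ring)
    (by intros; simp [Prod.ext_iff]; ring)
    (by intros; simp [Prod.ext_iff]; ring)

/-- First coordinate (coefficient of `x`). -/
def c₁ : Heis →ₗ[ℂ] ℂ := LinearMap.fst ℂ ℂ (ℂ × ℂ)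
/-- Second coordinate (coefficient of `y`). -/
def c₂ : Heis →ₗ[ℂ] ℂ := LinearMap.fst ℂ ℂ ℂ ∘ₗ LinearMap.snd ℂ ℂ (ℂ × ℂ)
/-- Third coordinate (coefficient of `h`). -/
def c₃ : Heis →ₗ[ℂ] ℂ := LinearMap.snd ℂ ℂ ℂ ∘ₗ LinearMap.snd ℂ ℂ (ℂ × ℂ)

/-- The co-bracket: `δ(h) = 0`, `δ(x) = y∧h`, `δ(y) = h∧x`,
where `u∧v = u⊗v − v⊗u`. -/
def hδ : Heis →ₗ[ℂ] Heis ⊗[ℂ] Heis :=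
  c₁.smulRight (Y ⊗ₜ[ℂ] H - H ⊗ₜ[ℂ] Y) + c₂.smulRight (H ⊗ₜ[ℂ] X - X ⊗ₜ[ℂ] H)

end Heis
end
noncomputable section
open Heis

/-- The derivation with matrix `D(x) = a₁x + a₂y`, `D(y) = b₁x + b₂y`,
`D(h) = (a₁+b₂)h`. -/
def heisD (a₁ a₂ b₁ b₂ : ℂ) : Heis →ₗ[ℂ] Heis :=
  c₁.smulRight (a₁ • X + a₂ • Y) + c₂.smulRight (b₁ • X + b₂ • Y) +
    c₃.smulRight ((a₁ + b₂) • H)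

/-- `B = e₁ x∧y + e₂ y∧h + e₃ h∧x`. -/
def heisB (e₁ e₂ e₃ : ℂ) : Heis ⊗[ℂ] Heis :=
  e₁ • (X ⊗ₜ[ℂ] Y - Y ⊗ₜ[ℂ] X) + e₂ • (Y ⊗ₜ[ℂ] H - H ⊗ₜ[ℂ] Y) +
    e₃ • (H ⊗ₜ[ℂ] X - X ⊗ₜ[ℂ] H)


noncomputable section
open Heis

def T2 : Heis ⊗[ℂ] Heis ≃ₗ[ℂ] Heis × Heis × Heis :=
  (TensorProduct.prodLeft ℂ ℂ ℂ (ℂ × ℂ) Heis).trans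
    ((TensorProduct.lid ℂ Heis).prodCongr
      ((TensorProduct.prodLeft ℂ ℂ ℂ ℂ Heis).trans
        ((TensorProduct.lid ℂ Heis).prodCongr (TensorProduct.lid ℂ Heis))))
@[simp] lemma T2_tmul (p q : Heis) : T2 (p ⊗ₜ q) = (p.1 • q, p.2.1 • q, p.2.2 • q) := by
  obtain ⟨p1, p2, p3⟩ := p
  simp [T2]
def T3 : Heis ⊗[ℂ] (Heis ⊗[ℂ] Heis) ≃ₗ[ℂ]
    (Heis × Heis × Heis) × (Heis × Heis × Heis) × (Heis × Heis × Heis) :=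
  (TensorProduct.prodLeft ℂ ℂ ℂ (ℂ × ℂ) (Heis ⊗[ℂ] Heis)).trans
    (((TensorProduct.lid ℂ _).trans T2).prodCongr
      ((TensorProduct.prodLeft ℂ ℂ ℂ ℂ (Heis ⊗[ℂ] Heis)).trans
        (((TensorProduct.lid ℂ _).trans T2).prodCongr ((TensorProduct.lid ℂ _).trans T2))))
@[simp] lemma T3_tmul (p : Heis) (t : Heis ⊗[ℂ] Heis) :
    T3 (p ⊗ₜ t) = (p.1 • T2 t, p.2.1 • T2 t, p.2.2 • T2 t) := by
  obtain ⟨p1, p2, p3⟩ := p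
  simp [T3]
end

set_option maxHeartbeats 4000000 in
set_option synthInstance.maxHeartbeats 400000 in
/-- **Example (computation).** For the Heisenberg Lie bialgebra, the flag-datum
conditions for `(0, D, kh, B)` with `D` as above and `B = e₁x∧y + e₂y∧h + e₃h∧x`
are equivalent to the five scalar equations; in particular if `k = 0` then
`e₁ = a₁ = b₂ = 0` and `a₂ = −b₁`, and if `k ∉ {0, ±2√−1}` then additionally
`a₂ = b₁ = 0`. -/
theorem heisenberg_flagDatum_computation (c a₁ a₂ b₁ b₂ e₁ e₂ e₃ : ℂ) :
    (IsFlagDatum Heis.hbr Heis.hδ 0 (heisD a₁ a₂ b₁ b₂) (c • H)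
        (heisB e₁ e₂ e₃) ↔
      a₁ * c + e₁ - a₂ - b₁ = 0 ∧ a₂ * c - 2 * b₂ = 0 ∧
        b₂ * c + e₁ + b₁ + a₂ = 0 ∧ b₁ * c + 2 * a₁ = 0 ∧ c * e₁ = 0) ∧
    (IsFlagDatum Heis.hbr Heis.hδ 0 (heisD a₁ a₂ b₁ b₂) (c • H)
        (heisB e₁ e₂ e₃) → c = 0 →
      e₁ = 0 ∧ a₁ = 0 ∧ b₂ = 0 ∧ a₂ = -b₁) ∧
    (IsFlagDatum Heis.hbr Heis.hδ 0 (heisD a₁ a₂ b₁ b₂) (c • H)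
        (heisB e₁ e₂ e₃) → c ≠ 0 → c ≠ 2 * Complex.I → c ≠ -2 * Complex.I →
      a₂ = 0 ∧ b₁ = 0) := by
  have hfwd : IsFlagDatum Heis.hbr Heis.hδ 0 (heisD a₁ a₂ b₁ b₂) (c • H) (heisB e₁ e₂ e₃) →
      a₁ * c + e₁ - a₂ - b₁ = 0 ∧ a₂ * c - 2 * b₂ = 0 ∧
        b₂ * c + e₁ + b₁ + a₂ = 0 ∧ b₁ * c + 2 * a₁ = 0 ∧ c * e₁ = 0 := by
    intro h
    obtain ⟨hB, h1a, h1b, h1c, h2, h3, h4⟩ := h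
    have e3 := congrArg T3 h3
    have e4x := congrArg T2 (h4 Heis.X)
    have e4y := congrArg T2 (h4 Heis.Y)
    simp [heisB, Heis.hδ, Heis.hbr, Heis.X, Heis.Y, Heis.H, Heis.c₁, Heis.c₂, Heis.c₃,
      swap12, asr, flipT, adT, heisD, tmul_add, tmul_sub, smul_tmul', smul_tmul,
      add_tmul, sub_tmul, smul_sub, smul_add, TensorProduct.assoc_tmul,
      TensorProduct.assoc_symm_tmul, TensorProduct.comm_tmul, Prod.ext_iff, mk₂_apply,
      sub_eq_zero, Prod.smul_mk, Prod.mk_add_mk] at e3 e4x e4y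
    refine ⟨by linear_combination e4x.1, by linear_combination e4x.2.1,
      by linear_combination e4y.2.1, by linear_combination -e4y.2.2.1, ?_⟩
    rcases e3.1 with h | h
    · linear_combination c * h
    · linear_combination e₁ * h
  refine ⟨⟨hfwd, fun h => ?_⟩, fun h hc => ?_, fun h hc hi hm => ?_⟩
  · obtain ⟨h1, h2, h3, h4, h5⟩ := h
    refine ⟨?_, ?_, ?_, ?_, ?_, ?_, ?_⟩
    · apply T2.injective
      simp [heisB, flipT, tmul_add, tmul_sub, smul_tmul', smul_tmul,
        add_tmul, sub_tmul, smul_sub, smul_add, TensorProduct.comm_tmul,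
        Heis.X, Heis.Y, Heis.H, Prod.ext_iff]
    · intro a b
      simp
    · simp [Heis.hδ, Heis.H, Heis.c₁, Heis.c₂]
    · intro a
      simp [Heis.hbr, Heis.hδ, Heis.H, Heis.c₁, Heis.c₂, Prod.ext_iff, mk₂_apply]
    · intro a b
      simp [heisD, Heis.hbr, Heis.X, Heis.Y, Heis.H, Heis.c₁, Heis.c₂, Heis.c₃,
        Prod.ext_iff, mk₂_apply, Prod.smul_mk, Prod.mk_add_mk]
      ring
    · apply T3.injective
      simp [heisB, Heis.hδ, Heis.X, Heis.Y, Heis.H, Heis.c₁, Heis.c₂, Heis.c₃,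
        swap12, asr, flipT, tmul_add, tmul_sub, smul_tmul', smul_tmul,
        add_tmul, sub_tmul, smul_sub, smul_add, TensorProduct.assoc_tmul,
        TensorProduct.assoc_symm_tmul, TensorProduct.comm_tmul, Prod.ext_iff,
        Prod.smul_mk, Prod.mk_add_mk]
      exact ⟨(mul_eq_zero.mp h5).symm, ⟨mul_eq_zero.mp h5, by ring⟩,
        ⟨mul_eq_zero.mp h5, by ring⟩, by ring, by ring⟩
    · intro a
      apply T2.injective
      simp [heisB, heisD, Heis.hδ, Heis.hbr, Heis.X, Heis.Y, Heis.H, Heis.c₁, Heis.c₂, Heis.c₃,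
        adT, flipT, tmul_add, tmul_sub, smul_tmul', smul_tmul,
        add_tmul, sub_tmul, smul_sub, smul_add, TensorProduct.comm_tmul, Prod.ext_iff,
        mk₂_apply, Prod.smul_mk, Prod.mk_add_mk]
      refine ⟨by linear_combination a.1 * h1 + a.2.1 * h4,
        by linear_combination a.1 * h2 + a.2.1 * h3,
        by linear_combination -a.1 * h1 - a.2.1 * h4,
        by linear_combination -a.1 * h2 - a.2.1 * h3, by ring⟩
  · obtain ⟨h1, h2, h3, h4, h5⟩ := hfwd h
    subst hc
    exact ⟨by linear_combination (h1 + h3) / 2, by linear_combination h4 / 2,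
      by linear_combination -h2 / 2, by linear_combination (h3 - h1) / 2⟩
  · obtain ⟨h1, h2, h3, h4, h5⟩ := hfwd h
    have he : e₁ = 0 := by
      rcases mul_eq_zero.mp h5 with h | h
      · exact absurd h hc
      · exact h
    subst he
    have hi' : c - 2 * Complex.I ≠ 0 := sub_ne_zero.mpr hi
    have hm' : c + 2 * Complex.I ≠ 0 := by
      intro h0
      exact hm (by linear_combination h0)
    have hc4 : c ^ 2 + 4 ≠ 0 := by
      intro h0
      exact mul_ne_zero hi' hm' (by linear_combination h0 - 4 * Complex.I_sq)
    have hA : a₂ * (c ^ 2 + 2) + 2 * b₁ = 0 := by linear_combination c * h2 + 2 * h3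
    have hB : b₁ * (c ^ 2 + 2) + 2 * a₂ = 0 := by linear_combination c * h4 - 2 * h1
    have hkey : a₂ * (c ^ 2 * (c ^ 2 + 4)) = 0 := by
      linear_combination (c ^ 2 + 2) * hA - 2 * hB
    have hkey2 : b₁ * (c ^ 2 * (c ^ 2 + 4)) = 0 := by
      linear_combination (c ^ 2 + 2) * hB - 2 * hA
    have hnz : c ^ 2 * (c ^ 2 + 4) ≠ 0 := mul_ne_zero (pow_ne_zero 2 hc) hc4
    constructor
    · rcases mul_eq_zero.mp hkey with h | h
      · exact h
      · exact absurd h hnz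
    · rcases mul_eq_zero.mp hkey2 with h | h
      · exact h
      · exact absurd h hnz

end
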